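/- Let P be a parametric system in K[U][X] with Wu's decomposition {C_1,...,C_m}; let S be the set of non-contradictory ascending chains among them and CS the set of contradictory ones. Then for any a ∈ K̄^d outside ⋃_{C ∈ CS} V^U(C), we have V(P(a)) = ⋃_{C ∈ S} V(C(a) \ I_C(a)). -/

import Mathlib

open MvPolynomial

noncomputable section

variable {K : Type*} [Field K] {d n : ℕ}

/-- Specialization of parameters: `K[U][X] → K̄[X]` substituting `a` for `U`. -/
def specAt (a : Fin d → AlgebraicClosure K) :
    MvPolynomial (Fin n) (MvPolynomial (Fin d) K) →+*
      MvPolynomial (Fin n) (AlgebraicClosure K) :=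
  MvPolynomial.map ((MvPolynomial.aeval a).toRingHom)

/-- Common zero set in `K̄ⁿ` of the specializations at `a` of a set of polynomials. -/
def zeroSetAt (a : Fin d → AlgebraicClosure K)
    (S : Set (MvPolynomial (Fin n) (MvPolynomial (Fin d) K))) :
    Set (Fin n → AlgebraicClosure K) :=
  {x | ∀ f ∈ S, MvPolynomial.eval x (specAt a f) = 0}

variable {A : Type*} [CommRing A]

/-- The main (largest) variable of a multivariate polynomial (defaults to `0`). -/
def mainVar [NeZero n] (F : MvPolynomial (Fin n) A) : Fin n := WithBot.unbotD 0 F.vars.max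

/-- The initial of `F`: its leading coefficient w.r.t. its main variable. -/
def initial [NeZero n] (F : MvPolynomial (Fin n) A) : MvPolynomial (Fin n) A :=
  ∑ m ∈ F.support.filter (fun m => m (mainVar F) = F.degreeOf (mainVar F)),
    MvPolynomial.monomial (m - Finsupp.single (mainVar F) (F.degreeOf (mainVar F))) (F.coeff m)

/-- `F` viewed as a univariate polynomial in the variable `j`. -/
def toUniv (j : Fin n) (F : MvPolynomial (Fin n) A) :
    Polynomial (MvPolynomial (Fin n) A) :=
  ∑ m ∈ F.support,
    Polynomial.monomial (m j) (MvPolynomial.monomial (m - Finsupp.single j (m j)) (F.coeff m))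

/-- The Sylvester matrix of two univariate polynomials. -/
def sylvester (f g : Polynomial A) :
    Matrix (Fin (f.natDegree + g.natDegree)) (Fin (f.natDegree + g.natDegree)) A :=
  fun i j =>
    if (i : ℕ) < g.natDegree then
      (if (i : ℕ) ≤ (j : ℕ) ∧ (j : ℕ) ≤ (i : ℕ) + f.natDegree then
        f.coeff (f.natDegree + i - j) else 0)
    else
      (if (i : ℕ) - g.natDegree ≤ (j : ℕ) ∧ (j : ℕ) ≤ ((i : ℕ) - g.natDegree) + g.natDegree then
        g.coeff (g.natDegree + ((i : ℕ) - g.natDegree) - j) else 0)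

/-- The resultant of two univariate polynomials (Sylvester determinant). -/
def resultant (f g : Polynomial A) : A := (sylvester f g).det

/-- `res(F, P)`: resultant w.r.t. the main variable of `P`. -/
def res1 [NeZero n] (F P : MvPolynomial (Fin n) A) : MvPolynomial (Fin n) A :=
  resultant (toUniv (mainVar P) F) (toUniv (mainVar P) P)

/-- Successive resultant of `F` w.r.t. the list `l` of polynomials. -/
def sres [NeZero n] (F : MvPolynomial (Fin n) A) (l : List (MvPolynomial (Fin n) A)) :
    MvPolynomial (Fin n) A :=
  l.foldl res1 F

/-- A triangular set: the main variables are strictly increasing. -/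
def IsTriangular [NeZero n] {r : ℕ} (T : Fin r → MvPolynomial (Fin n) A) : Prop :=
  (∀ i, (T i).vars.Nonempty) ∧ StrictMono (fun i => mainVar (T i))

/-- A regular chain. -/
def IsRegularChain [NeZero n] {r : ℕ} (T : Fin r → MvPolynomial (Fin n) A) : Prop :=
  IsTriangular T ∧ (∀ i : Fin r, (i : ℕ) = 0 → initial (T i) ≠ 0) ∧
    ∀ i : Fin r, 0 < (i : ℕ) →
      sres (initial (T i)) ((List.ofFn T).take i).reverse ≠ 0
/-- A contradictory ascending chain: a singleton consisting of a nonzero element of `K[U]`. -/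
def Contradictory [NeZero n] (C : Finset (MvPolynomial (Fin n) (MvPolynomial (Fin d) K))) : Prop :=
  ∃ b : MvPolynomial (Fin d) K, b ≠ 0 ∧ C = {MvPolynomial.C b}

/-- `C` is a characteristic set of the system `P`: `C ⊆ ⟨P⟩` and every `p ∈ P` pseudo-reduces to
zero modulo `C` (encoded via the pseudo-division identity). -/
def IsCharSet [NeZero n] (P : Set (MvPolynomial (Fin n) (MvPolynomial (Fin d) K)))
    (C : Finset (MvPolynomial (Fin n) (MvPolynomial (Fin d) K))) : Prop :=
  (C : Set (MvPolynomial (Fin n) (MvPolynomial (Fin d) K))) ⊆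
      (Ideal.span P : Set (MvPolynomial (Fin n) (MvPolynomial (Fin d) K))) ∧
    ∀ p ∈ P, ∃ k : MvPolynomial (Fin n) (MvPolynomial (Fin d) K) → ℕ,
      (∏ c ∈ C, initial c ^ k c) * p ∈
        Ideal.span (C : Set (MvPolynomial (Fin n) (MvPolynomial (Fin d) K)))

/-- `IsWuDecomp P D` : `D` is a Wu's (characteristic set) decomposition of the system `P`,
obtained by the recursive branching of Wu's well-ordering principle. -/
inductive IsWuDecomp [NeZero n] :
    Set (MvPolynomial (Fin n) (MvPolynomial (Fin d) K)) →
      Set (Finset (MvPolynomial (Fin n) (MvPolynomial (Fin d) K))) → Prop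
  | contra (P : Set (MvPolynomial (Fin n) (MvPolynomial (Fin d) K)))
      (b : MvPolynomial (Fin d) K) (hb : b ≠ 0)
      (hmem : MvPolynomial.C b ∈ Ideal.span P) :
      IsWuDecomp P {({MvPolynomial.C b} : Finset (MvPolynomial (Fin n) (MvPolynomial (Fin d) K)))}
  | node (P : Set (MvPolynomial (Fin n) (MvPolynomial (Fin d) K)))
      (C : Finset (MvPolynomial (Fin n) (MvPolynomial (Fin d) K)))
      (hC : IsCharSet P C) (hnc : ¬ Contradictory C)
      (D : MvPolynomial (Fin n) (MvPolynomial (Fin d) K) →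
        Set (Finset (MvPolynomial (Fin n) (MvPolynomial (Fin d) K))))
      (hD : ∀ c ∈ C, IsWuDecomp (P ∪ ↑C ∪ {initial c}) (D c)) :
      IsWuDecomp P ({C} ∪ ⋃ c ∈ C, D c)

lemma eval_specAt_span
    {S : Set (MvPolynomial (Fin n) (MvPolynomial (Fin d) K))}
    (a : Fin d → AlgebraicClosure K) (x : Fin n → AlgebraicClosure K)
    (h : ∀ f ∈ S, MvPolynomial.eval x (specAt a f) = 0)
    {f : MvPolynomial (Fin n) (MvPolynomial (Fin d) K)} (hf : f ∈ Ideal.span S) :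
    MvPolynomial.eval x (specAt a f) = 0 := by
  have hle : Ideal.span S ≤ RingHom.ker ((MvPolynomial.eval x).comp (specAt a)) := by
    rw [Ideal.span_le]
    intro g hg
    simpa [RingHom.mem_ker] using h g hg
  simpa [RingHom.mem_ker] using hle hf

lemma stmt8_key [NeZero n]
    (P : Set (MvPolynomial (Fin n) (MvPolynomial (Fin d) K)))
    (C : Finset (MvPolynomial (Fin n) (MvPolynomial (Fin d) K)))
    (hC : IsCharSet P C)
    (a : Fin d → AlgebraicClosure K) (x : Fin n → AlgebraicClosure K) :
    x ∈ zeroSetAt a P ↔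
      (x ∈ zeroSetAt a (C : Set (MvPolynomial (Fin n) (MvPolynomial (Fin d) K))) \
          zeroSetAt a {∏ c ∈ C, initial c}) ∨
        ∃ c ∈ C, x ∈ zeroSetAt a
          (P ∪ ↑C ∪ ({initial c} : Set (MvPolynomial (Fin n) (MvPolynomial (Fin d) K)))) := by
  set φ : MvPolynomial (Fin n) (MvPolynomial (Fin d) K) →+* AlgebraicClosure K :=
    (MvPolynomial.eval x).comp (specAt a) with hφ
  have hφ' : ∀ f, MvPolynomial.eval x (specAt a f) = φ f := fun f => rfl
  constructor
  · intro hx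
    have hxC : x ∈ zeroSetAt a (C : Set (MvPolynomial (Fin n) (MvPolynomial (Fin d) K))) := by
      intro f hf
      exact eval_specAt_span a x hx (hC.1 hf)
    by_cases hI : φ (∏ c ∈ C, initial c) = 0
    · rw [map_prod] at hI
      obtain ⟨c, hc, hc0⟩ := Finset.prod_eq_zero_iff.mp hI
      refine Or.inr ⟨c, hc, ?_⟩
      intro f hf
      rcases hf with (hf | hf) | hf
      · exact hx f hf
      · exact hxC f hf
      · rw [Set.mem_singleton_iff] at hf
        rw [hf, hφ']
        exact hc0
    · refine Or.inl ⟨hxC, ?_⟩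
      intro hmem
      exact hI (by simpa [hφ'] using hmem _ (Set.mem_singleton _))
  · rintro (⟨hxC, hI⟩ | ⟨c, hc, hx⟩)
    · intro p hp
      obtain ⟨k, hk⟩ := hC.2 p hp
      have h0 : φ ((∏ c ∈ C, initial c ^ k c) * p) = 0 := by
        rw [← hφ']
        exact eval_specAt_span a x hxC hk
      rw [map_mul, map_prod] at h0
      have hIne : φ (∏ c ∈ C, initial c) ≠ 0 := by
        intro h
        exact hI (by intro g hg; rw [Set.mem_singleton_iff] at hg; rw [hg, hφ']; exact h)
      rw [map_prod] at hIne
      have hne : ∏ c ∈ C, φ (initial c ^ k c) ≠ 0 := by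
        rw [Finset.prod_ne_zero_iff]
        intro c hc
        rw [map_pow]
        exact pow_ne_zero _ fun h => hIne (Finset.prod_eq_zero hc h)
      rw [hφ']
      exact (mul_eq_zero.mp h0).resolve_left hne
    · intro p hp
      exact hx p (Or.inl (Or.inl hp))

/-- Corollary wudecom: If `{C_1,...,C_m}` is a Wu's decomposition of `P`, then for
every parameter value `a ∈ K̄^d` avoiding the zero sets `V^U(C)` of all contradictory chains `C`,
`V(P(a)) = ⋃_{C non-contradictory} (V(C(a)) \ V(I_C(a)))`. -/
theorem stmt8 [NeZero n]
    (P : Set (MvPolynomial (Fin n) (MvPolynomial (Fin d) K))) (hPfin : P.Finite)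
    (D : Set (Finset (MvPolynomial (Fin n) (MvPolynomial (Fin d) K))))
    (hD : IsWuDecomp P D)
    (a : Fin d → AlgebraicClosure K)
    (ha : ∀ C ∈ D, ∀ b : MvPolynomial (Fin d) K, b ≠ 0 →
      C = {MvPolynomial.C b} → MvPolynomial.aeval a b ≠ 0) :
    zeroSetAt a P =
      ⋃ C ∈ {C ∈ D | ¬ Contradictory C},
        (zeroSetAt a (C : Set (MvPolynomial (Fin n) (MvPolynomial (Fin d) K))) \
          zeroSetAt a {∏ c ∈ C, initial c}) := by
  revert hPfin ha
  induction hD with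
  | contra P b hb hmem =>
    intro hPfin ha
    have hb' : MvPolynomial.aeval a b ≠ 0 := ha _ rfl b hb rfl
    have hcontra : Contradictory ({MvPolynomial.C b} :
        Finset (MvPolynomial (Fin n) (MvPolynomial (Fin d) K))) := ⟨b, hb, rfl⟩
    ext x
    simp only [Set.mem_iUnion, Set.mem_setOf_eq, Set.mem_singleton_iff]
    constructor
    · intro hx
      exfalso
      apply hb'
      have h0 : MvPolynomial.eval x (specAt a (MvPolynomial.C b)) = 0 :=
        eval_specAt_span a x hx hmem
      rwa [specAt, MvPolynomial.map_C, MvPolynomial.eval_C] at h0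
    · rintro ⟨C', ⟨hC', hnc⟩, -⟩
      exact absurd (hC' ▸ hcontra) hnc
  | node P C hC hnc D hD ih =>
    intro hPfin ha
    have hfin : ∀ c ∈ C, (P ∪ ↑C ∪
        ({initial c} : Set (MvPolynomial (Fin n) (MvPolynomial (Fin d) K)))).Finite :=
      fun c _ => (hPfin.union C.finite_toSet).union (Set.finite_singleton _)
    have hmem : ∀ c ∈ C, ∀ C' ∈ D c,
        C' ∈ ({C} : Set (Finset (MvPolynomial (Fin n) (MvPolynomial (Fin d) K)))) ∪
          ⋃ c ∈ C, D c :=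
      fun c hc C' hC' => Or.inr (Set.mem_iUnion₂.mpr ⟨c, hc, hC'⟩)
    have ih' : ∀ c ∈ C, zeroSetAt a (P ∪ ↑C ∪ {initial c}) =
        ⋃ C' ∈ {C' | C' ∈ D c ∧ ¬Contradictory C'},
          zeroSetAt a ↑C' \ zeroSetAt a {∏ c ∈ C', initial c} :=
      fun c hc => ih c hc (hfin c hc) (fun C' hC' => ha C' (hmem c hc C' hC'))
    ext x
    rw [stmt8_key P C hC a x]
    constructor
    · rintro (h | ⟨c, hc, hx⟩)
      · exact Set.mem_biUnion ⟨Or.inl rfl, hnc⟩ h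
      · rw [ih' c hc] at hx
        obtain ⟨C', hsep, hx⟩ := Set.mem_iUnion₂.mp hx
        exact Set.mem_biUnion ⟨hmem c hc C' hsep.1, hsep.2⟩ hx
    · intro hx
      obtain ⟨C', hsep, hx2⟩ := Set.mem_iUnion₂.mp hx
      obtain ⟨hC', hnc'⟩ := hsep
      rcases hC' with hC' | hC'
      · rw [Set.mem_singleton_iff] at hC'
        subst hC'
        exact Or.inl hx2
      · obtain ⟨c, hc, hC'⟩ := Set.mem_iUnion₂.mp hC'
        refine Or.inr ⟨c, hc, ?_⟩
        rw [ih' c hc]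
        exact Set.mem_biUnion ⟨hC', hnc'⟩ hx2

end
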